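/- Let N ∈ ℕ and let G ≤ Homeo(ℝ) be a subgroup such that every non-identity element of G has at most N fixed points. Then ℝ contains a minimal invariant subset for the action of G; moreover, the closure of any nonempty G-invariant subset of ℝ contains a minimal invariant subset. -/

import Mathlib

open Function Set Filter Topology

/-- The group of homeomorphisms of the real line, with `(f * g) x = f (g x)`. -/
abbrev HomeoR : Type := ℝ ≃ₜ ℝ

instance : Group HomeoR where
  mul f g := g.trans f
  one := Homeomorph.refl ℝ
  inv := Homeomorph.symm
  mul_assoc _ _ _ := rfl
  one_mul f := by ext x; rfl
  mul_one f := by ext x; rfl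
  inv_mul_cancel f := by ext x; exact f.symm_apply_apply x

@[simp] lemma HomeoR.mul_apply (f g : HomeoR) (x : ℝ) : (f * g) x = f (g x) := rfl
@[simp] lemma HomeoR.one_apply (x : ℝ) : (1 : HomeoR) x = x := rfl
@[simp] lemma HomeoR.inv_eq_symm (f : HomeoR) : f⁻¹ = f.symm := rfl

/-- The subgroup of orientation-preserving homeomorphisms of the line,
i.e. strictly increasing ones. -/
def HomeoPlus : Subgroup HomeoR where
  carrier := {f | StrictMono (f : ℝ → ℝ)}
  one_mem' := strictMono_id
  mul_mem' hf hg := hf.comp hg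
  inv_mem' := by
    intro f hf a b hab
    have h := hf.lt_iff_lt (a := f.symm a) (b := f.symm b)
    rw [f.apply_symm_apply, f.apply_symm_apply] at h
    exact h.mp hab

/-- `G` has at most `N` fixed points: every non-identity element fixes at most `N` points. -/
def HasAtMostNFixedPoints (G : Subgroup HomeoR) (N : ℕ) : Prop :=
  ∀ g ∈ G, g ≠ 1 → ∃ S : Finset ℝ, S.card ≤ N ∧ ∀ x : ℝ, g x = x → x ∈ S

/-- A continuous non-decreasing map `ℝ → ℝ` which is proper. -/
def MonotoneProper (h : ℝ → ℝ) : Prop :=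
  Continuous h ∧ Monotone h ∧ Tendsto h atTop atTop ∧ Tendsto h atBot atBot

/-- The action of `G` is (positively) semi-conjugate to the action of `F`. -/
def IsSemiConjTo (G F : Subgroup HomeoR) : Prop :=
  ∃ (θ : G →* F) (h : ℝ → ℝ), Surjective θ ∧ MonotoneProper h ∧
    ∀ g : G, ∀ x : ℝ, (θ g : HomeoR) (h x) = h ((g : HomeoR) x)

def IsAffineHomeo (f : HomeoR) : Prop := ∃ a b : ℝ, a ≠ 0 ∧ ∀ x : ℝ, f x = a * x + b

def IsTranslationHomeo (f : HomeoR) : Prop := ∃ b : ℝ, ∀ x : ℝ, f x = x + b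

def IsIsometryHomeo (f : HomeoR) : Prop :=
  ∃ b : ℝ, (∀ x : ℝ, f x = x + b) ∨ (∀ x : ℝ, f x = -x + b)

def IsInvariantSet (G : Subgroup HomeoR) (S : Set ℝ) : Prop :=
  ∀ g ∈ G, ∀ x ∈ S, (g : HomeoR) x ∈ S

/-- A minimal invariant set: nonempty, closed, invariant, with no proper
nonempty closed invariant subset. -/
def IsMinimalInvariant (G : Subgroup HomeoR) (M : Set ℝ) : Prop :=
  M.Nonempty ∧ IsClosed M ∧ IsInvariantSet G M ∧
    ∀ S : Set ℝ, S ⊆ M → S.Nonempty → IsClosed S → IsInvariantSet G S → S = M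

def orbitSet (G : Subgroup HomeoR) (x : ℝ) : Set ℝ := {y | ∃ g ∈ G, (g : HomeoR) x = y}

lemma iterAux_mem {f : ℝ → ℝ} {C : Set ℝ} (hf : ∀ x ∈ C, f x ∈ C) :
    ∀ n, ∀ x ∈ C, f^[n] x ∈ C := by
  intro n
  induction n with
  | zero => intro x hx; simpa using hx
  | succ n ih => intro x hx; rw [Function.iterate_succ_apply]; exact ih _ (hf x hx)

lemma fixedAux_of_tendsto {f : ℝ → ℝ} (hc : Continuous f) {z L : ℝ}
    (h : Tendsto (fun n => f^[n] z) atTop (𝓝 L)) : f L = L := by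
  have h1 : Tendsto (fun n => f^[n + 1] z) atTop (𝓝 L) :=
    h.comp (tendsto_add_atTop_nat 1)
  have h2 : Tendsto (fun n => f (f^[n] z)) atTop (𝓝 (f L)) :=
    (hc.tendsto L).comp h
  have he : (fun n => f^[n + 1] z) = fun n => f (f^[n] z) := by
    funext n; rw [Function.iterate_succ_apply']
  rw [he] at h1
  exact tendsto_nhds_unique h2 h1

lemma existsAux_iterate_lt {f : ℝ → ℝ} (hc : Continuous f) (hf : ∀ x, f x < x) (z c : ℝ) :
    ∃ n, f^[n] z < c := by
  by_contra hcon
  push_neg at hcon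
  have hanti : Antitone (fun n => f^[n] z) := antitone_nat_of_succ_le fun n => by
    simp only [Function.iterate_succ_apply']
    exact (hf _).le
  have hbdd : BddBelow (range fun n => f^[n] z) := ⟨c, by rintro y ⟨n, rfl⟩; exact hcon n⟩
  exact absurd (fixedAux_of_tendsto hc (tendsto_atTop_ciInf hanti hbdd)) (hf _).ne

lemma existsAux_lt_iterate {f : ℝ → ℝ} (hc : Continuous f) (hf : ∀ x, x < f x) (z c : ℝ) :
    ∃ n, c < f^[n] z := by
  by_contra hcon
  push_neg at hcon
  have hmono : Monotone (fun n => f^[n] z) := monotone_nat_of_le_succ fun n => by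
    simp only [Function.iterate_succ_apply']
    exact (hf _).le
  have hbdd : BddAbove (range fun n => f^[n] z) := ⟨c, by rintro y ⟨n, rfl⟩; exact hcon n⟩
  exact absurd (fixedAux_of_tendsto hc (tendsto_atTop_ciSup hmono hbdd)) (hf _).ne'

lemma descendAux {f : ℝ → ℝ} (hc : Continuous f) (hm : Monotone f) {p z : ℝ}
    (hfp : f p = p) (hpz : p ≤ z) (hdown : ∀ x, p < x → f x < x)
    {C : Set ℝ} (hC : IsClosed C) (hinv : ∀ x ∈ C, f x ∈ C) (hz : z ∈ C) : p ∈ C := by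
  have humem : ∀ n, f^[n] z ∈ C := fun n => iterAux_mem hinv n z hz
  have hup : ∀ n, p ≤ f^[n] z := by
    intro n
    induction n with
    | zero => simpa using hpz
    | succ n ih =>
      rw [Function.iterate_succ_apply', ← hfp]
      exact hm ih
  have hanti : Antitone (fun n => f^[n] z) := antitone_nat_of_succ_le fun n => by
    simp only [Function.iterate_succ_apply']
    rcases eq_or_lt_of_le (hup n) with h | h
    · rw [← h, hfp]
    · exact (hdown _ h).le
  have hbdd : BddBelow (range fun n => f^[n] z) := ⟨p, by rintro y ⟨n, rfl⟩; exact hup n⟩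
  have hlim := tendsto_atTop_ciInf hanti hbdd
  have hfL := fixedAux_of_tendsto hc hlim
  have hLp : p ≤ ⨅ n, f^[n] z := le_ciInf hup
  have hLeq : (⨅ n, f^[n] z) = p := by
    rcases eq_or_lt_of_le hLp with h | h
    · exact h.symm
    · exact absurd hfL (hdown _ h).ne
  rw [← hLeq]
  exact hC.mem_of_tendsto hlim (Eventually.of_forall humem)

lemma ascendAux {f : ℝ → ℝ} (hc : Continuous f) (hm : Monotone f) {p z : ℝ}
    (hfp : f p = p) (hzp : z ≤ p) (hup : ∀ x, x < p → x < f x)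
    {C : Set ℝ} (hC : IsClosed C) (hinv : ∀ x ∈ C, f x ∈ C) (hz : z ∈ C) : p ∈ C := by
  have humem : ∀ n, f^[n] z ∈ C := fun n => iterAux_mem hinv n z hz
  have hle : ∀ n, f^[n] z ≤ p := by
    intro n
    induction n with
    | zero => simpa using hzp
    | succ n ih =>
      rw [Function.iterate_succ_apply', ← hfp]
      exact hm ih
  have hmono : Monotone (fun n => f^[n] z) := monotone_nat_of_le_succ fun n => by
    simp only [Function.iterate_succ_apply']
    rcases eq_or_lt_of_le (hle n) with h | h
    · rw [h, hfp, ← h]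
    · exact (hup _ h).le
  have hbdd : BddAbove (range fun n => f^[n] z) := ⟨p, by rintro y ⟨n, rfl⟩; exact hle n⟩
  have hlim := tendsto_atTop_ciSup hmono hbdd
  have hfL := fixedAux_of_tendsto hc hlim
  have hLp : (⨆ n, f^[n] z) ≤ p := ciSup_le hle
  have hLeq : (⨆ n, f^[n] z) = p := by
    rcases eq_or_lt_of_le hLp with h | h
    · exact h
    · exact absurd hfL (hup _ h).ne'
  rw [← hLeq]
  exact hC.mem_of_tendsto hlim (Eventually.of_forall humem)

lemma noCrossAux_lt {g : ℝ → ℝ} (hc : Continuous g) {z w : ℝ}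
    (hno : ∀ x ∈ uIcc z w, g x ≠ x) (hz : g z < z) : g w < w := by
  rcases lt_trichotomy (g w) w with h | h | h
  · exact h
  · exact absurd h (hno w right_mem_uIcc)
  · exfalso
    have hcont : ContinuousOn (fun x => g x - x) (uIcc z w) :=
      (hc.sub continuous_id).continuousOn
    have h0 : (0 : ℝ) ∈ uIcc (g z - z) (g w - w) :=
      Set.mem_uIcc.mpr (Or.inl ⟨by linarith, by linarith⟩)
    obtain ⟨x, hx, hx0⟩ := intermediate_value_uIcc hcont h0
    exact hno x hx (by simpa [sub_eq_zero] using hx0)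

lemma noCrossAux_gt {g : ℝ → ℝ} (hc : Continuous g) {z w : ℝ}
    (hno : ∀ x ∈ uIcc z w, g x ≠ x) (hz : z < g z) : w < g w := by
  rcases lt_trichotomy w (g w) with h | h | h
  · exact h
  · exact absurd h.symm (hno w right_mem_uIcc)
  · exfalso
    have hcont : ContinuousOn (fun x => g x - x) (uIcc z w) :=
      (hc.sub continuous_id).continuousOn
    have h0 : (0 : ℝ) ∈ uIcc (g z - z) (g w - w) :=
      Set.mem_uIcc.mpr (Or.inr ⟨by linarith, by linarith⟩)
    obtain ⟨x, hx, hx0⟩ := intermediate_value_uIcc hcont h0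
    exact hno x hx (by simpa [sub_eq_zero] using hx0)

lemma symmAux_strictMono (g : HomeoR) (h : StrictMono ⇑g) : StrictMono ⇑g.symm := by
  intro a b hab
  have h2 := h.lt_iff_lt (a := g.symm a) (b := g.symm b)
  rw [g.apply_symm_apply, g.apply_symm_apply] at h2
  exact h2.mp hab

lemma symmAux_strictAnti (g : HomeoR) (h : StrictAnti ⇑g) : StrictAnti ⇑g.symm := by
  intro a b hab
  have h2 := h.lt_iff_gt (a := g.symm a) (b := g.symm b)
  rw [g.apply_symm_apply, g.apply_symm_apply] at h2
  exact h2.mp hab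

lemma orbitAux_minimal (G : Subgroup HomeoR) (x : ℝ) (hcl : IsClosed (orbitSet G x)) :
    IsMinimalInvariant G (orbitSet G x) := by
  refine ⟨⟨x, 1, G.one_mem, rfl⟩, hcl, ?_, ?_⟩
  · rintro g hg y ⟨g', hg', rfl⟩
    exact ⟨g * g', G.mul_mem hg hg', rfl⟩
  · rintro S hSsub ⟨y, hy⟩ _ hSinv
    obtain ⟨g0, hg0G, hg0x⟩ := hSsub hy
    have hxS : x ∈ S := by
      have h1 := hSinv g0⁻¹ (G.inv_mem hg0G) y hy
      have h2 : (g0⁻¹ : HomeoR) y = x := by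
        rw [← hg0x]
        simpa using g0.symm_apply_apply x
      rwa [h2] at h1
    refine Subset.antisymm hSsub ?_
    rintro z ⟨g, hgG, rfl⟩
    exact hSinv g hgG x hxS

lemma meetAux_translate (h : HomeoR) (hmono : StrictMono ⇑h) (hup : ∀ x, x < h x)
    {C : Set ℝ} (hC1 : ∀ x ∈ C, h x ∈ C) (hC2 : ∀ x ∈ C, h.symm x ∈ C) {z : ℝ} (hz : z ∈ C) :
    (C ∩ Icc (0 : ℝ) (h 0)).Nonempty := by
  classical
  have hdown : ∀ x, h.symm x < x := fun x => by
    have := hup (h.symm x)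
    rwa [h.apply_symm_apply] at this
  obtain ⟨m, hm⟩ := existsAux_iterate_lt h.symm.continuous hdown z 0
  set w := (⇑h.symm)^[m] z with hw
  have hwC : w ∈ C := iterAux_mem hC2 m z hz
  obtain ⟨k, hk⟩ := existsAux_lt_iterate h.continuous hup w 0
  have hex : ∃ n, 0 < (⇑h)^[n] w := ⟨k, hk⟩
  set n := Nat.find hex with hn
  have hpos : 0 < (⇑h)^[n] w := Nat.find_spec hex
  have hn0 : n ≠ 0 := by
    intro h0
    rw [h0] at hpos
    simp only [Function.iterate_zero_apply] at hpos
    linarith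
  have hprev : ¬ 0 < (⇑h)^[n - 1] w := Nat.find_min hex (Nat.pred_lt hn0)
  have heq : (⇑h)^[n] w = h ((⇑h)^[n - 1] w) := by
    conv_lhs => rw [← Nat.succ_pred_eq_of_pos (Nat.pos_of_ne_zero hn0)]
    rw [Function.iterate_succ_apply']
    rfl
  have hle : (⇑h)^[n] w ≤ h 0 := by
    rw [heq]
    exact hmono.monotone (not_lt.mp hprev)
  exact ⟨(⇑h)^[n] w, iterAux_mem hC1 n w hwC, hpos.le, hle⟩

lemma keyAux (N : ℕ) (G : Subgroup HomeoR) (hG : HasAtMostNFixedPoints G N)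
    (S : Set ℝ) (hSne : S.Nonempty) (hSinv : IsInvariantSet G S) :
    ∃ M : Set ℝ, M ⊆ closure S ∧ IsMinimalInvariant G M := by
  by_cases hA : ∃ g : HomeoR, g ∈ G ∧ g ≠ 1 ∧ StrictMono ⇑g
  · obtain ⟨g, hgG, hgne, hgmono⟩ := hA
    have hsm : StrictMono ⇑g.symm := symmAux_strictMono g hgmono
    -- a compact set met by every nonempty closed invariant set
    have hK : ∃ K : Set ℝ, IsCompact K ∧
        ∀ C : Set ℝ, C.Nonempty → IsClosed C → IsInvariantSet G C → (C ∩ K).Nonempty := by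
      have hCg' : ∀ C : Set ℝ, IsInvariantSet G C → ∀ x ∈ C, g.symm x ∈ C := by
        intro C hCinv x hx
        have := hCinv g⁻¹ (G.inv_mem hgG) x hx
        simpa using this
      by_cases hfix : ∃ p : ℝ, g p = p
      · -- g has fixed points; K = [min Fix, max Fix]
        obtain ⟨S₀, -, hS₀⟩ := hG g hgG hgne
        have hFixfin : {x : ℝ | g x = x}.Finite :=
          S₀.finite_toSet.subset fun x hx => hS₀ x hx
        have hFne : hFixfin.toFinset.Nonempty := by
          obtain ⟨p, hp⟩ := hfix
          exact ⟨p, hFixfin.mem_toFinset.mpr hp⟩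
        set a := hFixfin.toFinset.min' hFne with hadef
        set b := hFixfin.toFinset.max' hFne with hbdef
        have ha : g a = a := hFixfin.mem_toFinset.mp (hFixfin.toFinset.min'_mem hFne)
        have hb : g b = b := hFixfin.mem_toFinset.mp (hFixfin.toFinset.max'_mem hFne)
        have hab : a ≤ b := hFixfin.toFinset.min'_le _ (hFixfin.toFinset.max'_mem hFne)
        have ha' : g.symm a = a := g.symm_apply_eq.mpr ha.symm
        have hb' : g.symm b = b := g.symm_apply_eq.mpr hb.symm
        refine ⟨Icc a b, isCompact_Icc, ?_⟩
        rintro C ⟨z, hz⟩ hCcl hCinv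
        have hCg : ∀ x ∈ C, g x ∈ C := fun x hx => hCinv g hgG x hx
        have hCgs : ∀ x ∈ C, g.symm x ∈ C := hCg' C hCinv
        rcases le_or_gt z b with hzb | hzb
        · rcases le_or_gt a z with haz | haz
          · exact ⟨z, hz, haz, hzb⟩
          · -- z < a
            have hno : ∀ x, x < a → g x ≠ x := fun x hx hgx =>
              absurd (hFixfin.toFinset.min'_le x (hFixfin.mem_toFinset.mpr hgx))
                (not_le.mpr hx)
            have hsub : ∀ w, w < a → uIcc z w ⊆ Iio a := fun w hw =>
              Set.ordConnected_Iio.uIcc_subset haz hw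
            rcases (hno z haz).lt_or_gt with hgz | hgz
            · -- g z < z : ascend with g.symm
              have hup : ∀ x, x < a → x < g.symm x := by
                intro x hx
                by_contra hle
                push_neg at hle
                have h1 : g x < x :=
                  noCrossAux_lt g.continuous (fun y hy => hno y (hsub x hx hy)) hgz
                have h2 : x ≤ g x := by
                  calc x = g (g.symm x) := (g.apply_symm_apply x).symm
                  _ ≤ g x := hgmono.monotone hle
                linarith
              exact ⟨a, ascendAux g.symm.continuous hsm.monotone ha' haz.le hup hCcl hCgs hz,
                le_refl a, hab⟩
            · -- z < g z : ascend with g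
              have hup : ∀ x, x < a → x < g x := fun w hw =>
                noCrossAux_gt g.continuous (fun y hy => hno y (hsub w hw hy)) hgz
              exact ⟨a, ascendAux g.continuous hgmono.monotone ha haz.le hup hCcl hCg hz,
                le_refl a, hab⟩
        · -- b < z
          have hno : ∀ x, b < x → g x ≠ x := fun x hx hgx =>
            absurd (hFixfin.toFinset.le_max' x (hFixfin.mem_toFinset.mpr hgx))
              (not_le.mpr hx)
          have hsub : ∀ w, b < w → uIcc z w ⊆ Ioi b := fun w hw =>
            Set.ordConnected_Ioi.uIcc_subset hzb hw
          rcases (hno z hzb).lt_or_gt with hgz | hgz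
          · -- g z < z : descend with g
            have hdown : ∀ x, b < x → g x < x := fun w hw =>
              noCrossAux_lt g.continuous (fun y hy => hno y (hsub w hw hy)) hgz
            exact ⟨b, descendAux g.continuous hgmono.monotone hb hzb.le hdown hCcl hCg hz,
              hab, le_refl b⟩
          · -- z < g z : descend with g.symm
            have hdown : ∀ x, b < x → g.symm x < x := by
              intro x hx
              by_contra hle
              push_neg at hle
              have h1 : x < g x :=
                noCrossAux_gt g.continuous (fun y hy => hno y (hsub x hx hy)) hgz
              have h2 : g x ≤ x := by
                calc g x ≤ g (g.symm x) := hgmono.monotone hle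
                _ = x := g.apply_symm_apply x
              linarith
            exact ⟨b, descendAux g.symm.continuous hsm.monotone hb' hzb.le hdown hCcl hCgs hz,
              hab, le_refl b⟩
      · -- g fixed-point free
        push_neg at hfix
        rcases (hfix 0).lt_or_gt with hg0 | hg0
        · -- g x < x everywhere; use g.symm which moves everything up
          have hdownall : ∀ x, g x < x := fun w =>
            noCrossAux_lt g.continuous (fun y _ => hfix y) hg0
          have hupall : ∀ x, x < g.symm x := by
            intro x
            have := hdownall (g.symm x)
            rwa [g.apply_symm_apply] at this
          refine ⟨Icc 0 (g.symm 0), isCompact_Icc, ?_⟩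
          rintro C ⟨z, hz⟩ _ hCinv
          have hC2 : ∀ x ∈ C, g.symm.symm x ∈ C := by
            intro x hx
            rw [Homeomorph.symm_symm]
            exact hCinv g hgG x hx
          exact meetAux_translate g.symm hsm hupall (hCg' C hCinv) hC2 hz
        · have hupall : ∀ x, x < g x := fun w =>
            noCrossAux_gt g.continuous (fun y _ => hfix y) hg0
          refine ⟨Icc 0 (g 0), isCompact_Icc, ?_⟩
          rintro C ⟨z, hz⟩ _ hCinv
          exact meetAux_translate g hgmono hupall (fun x hx => hCinv g hgG x hx)
            (hCg' C hCinv) hz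
    -- Zorn's lemma
    obtain ⟨K, hKcomp, hKmeet⟩ := hK
    set 𝒞 : Set (Set ℝ) :=
      {C | C ⊆ closure S ∧ C.Nonempty ∧ IsClosed C ∧ IsInvariantSet G C} with h𝒞
    have hclinv : IsInvariantSet G (closure S) := by
      intro g' hg' x hx
      exact map_mem_closure g'.continuous hx fun y hy => hSinv g' hg' y hy
    have hclS : closure S ∈ 𝒞 :=
      ⟨Subset.rfl, hSne.closure, isClosed_closure, hclinv⟩
    have hzorn := zorn_superset_nonempty 𝒞 ?_ (closure S) hclS
    · obtain ⟨M, -, hMmin⟩ := hzorn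
      obtain ⟨hM1, hM2, hM3, hM4⟩ := hMmin.prop
      refine ⟨M, hM1, hM2, hM3, hM4, ?_⟩
      intro S' h1 h2 h3 h4
      exact subset_antisymm h1 (hMmin.2 ⟨h1.trans hM1, h2, h3, h4⟩ h1)
    · intro c hc𝒞 hchain hcne
      refine ⟨⋂₀ c, ⟨?_, ?_, ?_, ?_⟩, fun s hs => sInter_subset_of_mem hs⟩
      · obtain ⟨C₀, hC₀⟩ := hcne
        exact (sInter_subset_of_mem hC₀).trans (hc𝒞 hC₀).1
      · haveI : Nonempty c := hcne.to_subtype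
        have hne : (⋂ i : c, ((i : Set ℝ) ∩ K)).Nonempty := by
          apply IsCompact.nonempty_iInter_of_directed_nonempty_isCompact_isClosed
          · rintro i j
            rcases hchain.total i.2 j.2 with h | h
            · exact ⟨i, Subset.rfl, inter_subset_inter_left K h⟩
            · exact ⟨j, inter_subset_inter_left K h, Subset.rfl⟩
          · exact fun i => hKmeet i (hc𝒞 i.2).2.1 (hc𝒞 i.2).2.2.1 (hc𝒞 i.2).2.2.2
          · exact fun i => hKcomp.inter_left (hc𝒞 i.2).2.2.1
          · exact fun i => ((hc𝒞 i.2).2.2.1).inter hKcomp.isClosed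
        obtain ⟨x, hx⟩ := hne
        refine ⟨x, ?_⟩
        rw [mem_sInter]
        intro s hs
        exact (mem_iInter.mp hx ⟨s, hs⟩).1
      · exact isClosed_sInter fun s hs => (hc𝒞 hs).2.2.1
      · intro g' hg' x hx
        rw [mem_sInter] at hx ⊢
        intro s hs
        exact (hc𝒞 hs).2.2.2 g' hg' x (hx s hs)
  · -- no nontrivial increasing element: orbits are finite
    push_neg at hA
    obtain ⟨x₀, hx₀⟩ := hSne
    have horb : orbitSet G x₀ ⊆ S := by
      rintro y ⟨g, hg, rfl⟩
      exact hSinv g hg x₀ hx₀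
    have hanti : ∀ g : HomeoR, g ∈ G → g ≠ 1 → StrictAnti ⇑g := by
      intro g hgG hgne
      rcases g.continuous.strictMono_of_inj g.injective with h | h
      · exact absurd h (hA g hgG hgne)
      · exact h
    have hfin : (orbitSet G x₀).Finite := by
      by_cases hex : ∃ h : HomeoR, h ∈ G ∧ h ≠ 1
      · obtain ⟨h, hhG, hhne⟩ := hex
        apply (Set.finite_singleton (h x₀) |>.insert x₀).subset
        rintro y ⟨g, hgG, rfl⟩
        by_cases hg1 : g = 1
        · subst hg1; simp
        · have hgeq : g = h := by
            by_contra hne'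
            have hne1 : g * h⁻¹ ≠ 1 := fun he => hne' (by rwa [mul_inv_eq_one] at he)
            have hmono : StrictMono ⇑(g * h⁻¹) := by
              intro u v huv
              exact hanti g hgG hg1 (symmAux_strictAnti h (hanti h hhG hhne) huv)
            exact hA (g * h⁻¹) (G.mul_mem hgG (G.inv_mem hhG)) hne1 hmono
          subst hgeq
          simp [Set.mem_insert_iff]
      · push_neg at hex
        apply (Set.finite_singleton x₀).subset
        rintro y ⟨g, hgG, rfl⟩
        rw [hex g hgG]
        simp
    exact ⟨orbitSet G x₀, horb.trans subset_closure,
      orbitAux_minimal G x₀ hfin.isClosed⟩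

/-- A group with at most `N` fixed points admits a minimal invariant subset; moreover the
closure of every nonempty invariant subset contains a minimal invariant subset. -/
theorem exists_minimal_invariant (N : ℕ) (G : Subgroup HomeoR)
    (hG : HasAtMostNFixedPoints G N) :
    (∃ M : Set ℝ, IsMinimalInvariant G M) ∧
    ∀ S : Set ℝ, S.Nonempty → IsInvariantSet G S →
      ∃ M : Set ℝ, M ⊆ closure S ∧ IsMinimalInvariant G M := by
  constructor
  · obtain ⟨M, -, hM⟩ := keyAux N G hG univ ⟨0, trivial⟩ (fun g _ x _ => trivial)
    exact ⟨M, hM⟩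
  · exact fun S hne hinv => keyAux N G hG S hne hinv
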